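/- Let C ∈ ℂ^{L×L}, let T be a positive integer, and let v ∈ ℂ^L be a nonzero vector such that C^T v = v. Let k = dim 𝓚_T where 𝓚_T = span{v, Cv, …, C^{T−1}v}, and let W ∈ ℂ^{L×k} be a matrix whose columns form an orthonormal basis of 𝓚_T. Then (W* C W)^T = I_k, and consequently every eigenvalue z of the compression W* C W ∈ ℂ^{k×k} satisfies z^T = 1; in particular |z| = 1. -/

import Mathlib

open scoped Matrix

/-- The Krylov subspace `𝓚_T = span{v, Cv, C²v, …, C^{T−1}v} ⊆ ℂ^L`. -/
noncomputable def krylov {L : ℕ} (C : Matrix (Fin L) (Fin L) ℂ) (v : Fin L → ℂ) (T : ℕ) :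
    Submodule ℂ (Fin L → ℂ) :=
  Submodule.span ℂ (Set.range fun i : Fin T => (C ^ (i : ℕ)).mulVec v)

lemma col_of_mul {L m k : ℕ} (A : Matrix (Fin L) (Fin m) ℂ) (B : Matrix (Fin m) (Fin k) ℂ)
    (j : Fin k) : (fun i => (A * B) i j) = A.mulVec (fun l => B l j) := by
  funext i
  simp [Matrix.mul_apply, Matrix.mulVec, dotProduct]

/-- Let `C ∈ ℂ^{L×L}`, `T > 0`, and `v ≠ 0` with `C^T v = v`.  If `k = dim 𝓚_T` and
the columns of `W ∈ ℂ^{L×k}` form an orthonormal basis of `𝓚_T` (i.e. `Wᴴ W = I_k` and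
the columns span `𝓚_T`), then `(Wᴴ C W)^T = I_k`, and every eigenvalue `z` of `Wᴴ C W`
satisfies `z^T = 1`; in particular `|z| = 1`. -/
theorem compression_pow_eq_one
    {L : ℕ} (C : Matrix (Fin L) (Fin L) ℂ) (T : ℕ) (hT : 0 < T)
    (v : Fin L → ℂ) (hv : v ≠ 0) (hCv : (C ^ T).mulVec v = v)
    (k : ℕ) (hk : k = Module.finrank ℂ (krylov C v T))
    (W : Matrix (Fin L) (Fin k) ℂ)
    (hWortho : Wᴴ * W = 1)
    (hWspan : Submodule.span ℂ (Set.range Wᵀ) = krylov C v T) :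
    (Wᴴ * C * W) ^ T = 1 ∧
      ∀ z : ℂ, (∃ u : Fin k → ℂ, u ≠ 0 ∧ (Wᴴ * C * W).mulVec u = z • u) →
        z ^ T = 1 ∧ ‖z‖ = 1 := by
  -- columns of W lie in the Krylov subspace
  have hmem : ∀ j : Fin k, (fun i => W i j) ∈ krylov C v T := by
    intro j
    rw [← hWspan]
    exact Submodule.subset_span ⟨j, rfl⟩
  -- Krylov subspace is C-invariant
  have hCinv : ∀ x ∈ krylov C v T, C.mulVec x ∈ krylov C v T := by
    intro x hx
    refine Submodule.span_induction ?_ ?_ ?_ ?_ hx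
    · rintro _ ⟨i, rfl⟩
      rw [Matrix.mulVec_mulVec, ← pow_succ']
      by_cases h : (i : ℕ) + 1 < T
      · exact Submodule.subset_span ⟨⟨i + 1, h⟩, rfl⟩
      · have : (i : ℕ) + 1 = T := le_antisymm i.2 (not_lt.mp h)
        rw [this, hCv]
        exact Submodule.subset_span ⟨⟨0, hT⟩, by simp⟩
    · simp
    · intro a b _ _ ha hb
      rw [Matrix.mulVec_add]; exact Submodule.add_mem _ ha hb
    · intro c a _ ha
      rw [Matrix.mulVec_smul]; exact Submodule.smul_mem _ c ha
  -- C^T acts as identity on the Krylov subspace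
  have hCT : ∀ x ∈ krylov C v T, (C ^ T).mulVec x = x := by
    intro x hx
    refine Submodule.span_induction ?_ ?_ ?_ ?_ hx
    · rintro _ ⟨i, rfl⟩
      rw [Matrix.mulVec_mulVec, pow_mul_comm, ← Matrix.mulVec_mulVec, hCv]
    · simp
    · intro a b _ _ ha hb
      rw [Matrix.mulVec_add, ha, hb]
    · intro c a _ ha
      rw [Matrix.mulVec_smul, ha]
  -- W Wᴴ is the identity on the Krylov subspace
  have hproj : ∀ x ∈ krylov C v T, W.mulVec (Wᴴ.mulVec x) = x := by
    intro x hx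
    rw [← hWspan, show Set.range Wᵀ = Set.range (Matrix.col W) from rfl, ← Matrix.range_mulVecLin] at hx
    obtain ⟨c, rfl⟩ := hx
    show W.mulVec (Wᴴ.mulVec (W.mulVec c)) = W.mulVec c
    rw [Matrix.mulVec_mulVec, Matrix.mulVec_mulVec, Matrix.mul_assoc, hWortho, Matrix.mul_one]
  set M := Wᴴ * C * W with hM
  -- key intertwining: W * M^n = C^n * W
  have hWCW : W * M = C * W := by
    ext i j
    have h1 : (fun i => (W * M) i j) i = (C * W) i j := by
      rw [col_of_mul]
      have : (fun l => M l j) = Wᴴ.mulVec (fun l => (C * W) l j) := by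
        rw [hM, Matrix.mul_assoc]
        exact col_of_mul Wᴴ (C * W) j
      rw [this, col_of_mul]
      exact congrFun (hproj _ (hCinv _ (hmem j))) i
    exact h1
  have hWMn : ∀ n : ℕ, W * M ^ n = C ^ n * W := by
    intro n
    induction n with
    | zero => simp
    | succ n ih =>
      rw [pow_succ', pow_succ', ← Matrix.mul_assoc, hWCW, Matrix.mul_assoc, ih,
        ← Matrix.mul_assoc]
  -- C^T * W = W
  have hCTW : C ^ T * W = W := by
    ext i j
    have := congrFun (hCT _ (hmem j)) i
    rw [← col_of_mul] at this
    exact this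
  have hMT : M ^ T = 1 := by
    calc M ^ T = (Wᴴ * W) * M ^ T := by rw [hWortho, Matrix.one_mul]
    _ = Wᴴ * (W * M ^ T) := by rw [Matrix.mul_assoc]
    _ = Wᴴ * W := by rw [hWMn, hCTW]
    _ = 1 := hWortho
  refine ⟨hMT, ?_⟩
  rintro z ⟨u, hu, huz⟩
  have hpow : ∀ n : ℕ, (M ^ n).mulVec u = z ^ n • u := by
    intro n
    induction n with
    | zero => simp
    | succ n ih =>
      rw [pow_succ', ← Matrix.mulVec_mulVec, ih, Matrix.mulVec_smul, huz, smul_smul,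
        ← pow_succ]
  have h1 : z ^ T • u = u := by rw [← hpow, hMT, Matrix.one_mulVec]
  have hz : z ^ T = 1 := by
    by_contra h
    have : (z ^ T - 1) • u = 0 := by rw [sub_smul, h1, one_smul, sub_self]
    rcases smul_eq_zero.mp this with h' | h'
    · exact h (sub_eq_zero.mp h')
    · exact hu h'
  refine ⟨hz, ?_⟩
  have habs : ‖z‖ ^ T = 1 := by
    rw [← norm_pow, hz, norm_one]
  have h0 : 0 ≤ ‖z‖ := norm_nonneg z
  rcases pow_eq_one_iff_cases.mp habs with h | h | h
  · omega
  · exact h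
  · exfalso; nlinarith
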